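/- Let S consist of the unary signature Δ₀ together with the signatures g_k for all k ≥ 1, and let ⟨S⟩ be the tensor closure of S. Let f ∈ ⟨S⟩ be a signature of arity n and let α ∈ supp(f). (i) If α_i = 0 and α⁺ is obtained from α by changing its i-th bit to 1, then f(α⁺) = f(α)/2 or f(α⁺) = 0. (ii) If α_i = 1 and α⁻ is obtained from α by changing its i-th bit to 0, then f(α⁻) = 2·f(α). -/

import Mathlib

/-- Number of `1`s (Hamming weight) of a Boolean string. -/
def wt1 {n : ℕ} (x : Fin n → Bool) : ℕ := (Finset.univ.filter fun i => x i = true).card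

/-- The tensor product of two signatures: `(x,y) ↦ f(x)·g(y)`. -/
noncomputable def tensorSig {a b : ℕ} (f : (Fin a → Bool) → ℂ) (g : (Fin b → Bool) → ℂ) :
    (Fin (a + b) → Bool) → ℂ :=
  fun x => f (fun i => x (Fin.castAdd b i)) * g (fun j => x (Fin.natAdd a j))

/-- Membership in `S = {Δ₀} ∪ {g_k : k ≥ 1}`: either the unary `Δ₀ = [1,0]`,
or the symmetric arity-`k` signature `g_k` (`k ≥ 1`) with value `2` at Hamming
weight `0`, value `1` at Hamming weight `1`, and value `0` at weight `≥ 2`. -/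
def InS {n : ℕ} (h : (Fin n → Bool) → ℂ) : Prop :=
  (n = 1 ∧ ∀ x, h x = if wt1 x = 0 then 1 else 0) ∨
  (1 ≤ n ∧ ∀ x, h x = if wt1 x = 0 then 2 else if wt1 x = 1 then 1 else 0)

/-- Tensor products of finitely many (at least one) members of `S`. -/
inductive TensorOfS : (m : ℕ) → ((Fin m → Bool) → ℂ) → Prop
  | atom {m : ℕ} {h : (Fin m → Bool) → ℂ} (hs : InS h) : TensorOfS m h
  | tensor {a b : ℕ} {f : (Fin a → Bool) → ℂ} {g : (Fin b → Bool) → ℂ}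
      (hf : TensorOfS a f) (hg : TensorOfS b g) : TensorOfS (a + b) (tensorSig f g)

/-- The tensor closure `⟨S⟩`: signatures that are identically `0` or equal, up
to a nonzero scalar and a permutation of the variables, to a tensor product of
finitely many members of `S`. -/
def InTC {n : ℕ} (f : (Fin n → Bool) → ℂ) : Prop :=
  (∀ x, f x = 0) ∨
  ∃ (c : ℂ), c ≠ 0 ∧ ∃ (σ : Equiv.Perm (Fin n)) (h : (Fin n → Bool) → ℂ),
    TensorOfS n h ∧ ∀ x, f x = c * h (x ∘ σ)

lemma wt1_eq_zero_iff {n : ℕ} (x : Fin n → Bool) : wt1 x = 0 ↔ ∀ i, x i = false := by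
  simp [wt1, Finset.card_eq_zero, Finset.filter_eq_empty_iff]

lemma wt1_update_true {n : ℕ} (α : Fin n → Bool) (i : Fin n) (h : α i = false) :
    wt1 (Function.update α i true) = wt1 α + 1 := by
  unfold wt1
  have hset : Finset.univ.filter (fun j => Function.update α i true j = true)
      = insert i (Finset.univ.filter fun j => α j = true) := by
    ext j
    by_cases hj : j = i <;> simp [Function.update_apply, hj, h]
  rw [hset, Finset.card_insert_of_notMem (by simp [h])]

lemma wt1_update_false {n : ℕ} (α : Fin n → Bool) (i : Fin n) (h : α i = true) :
    wt1 α = wt1 (Function.update α i false) + 1 := by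
  unfold wt1
  have hset : Finset.univ.filter (fun j => Function.update α i false j = true)
      = (Finset.univ.filter fun j => α j = true).erase i := by
    ext j
    by_cases hj : j = i <;> simp [Function.update_apply, hj]
  rw [hset, Finset.card_erase_of_mem (by simp [h])]
  have : 1 ≤ (Finset.univ.filter fun j => α j = true).card :=
    Finset.card_pos.mpr ⟨i, by simp [h]⟩
  omega

lemma update_castAdd {a b : ℕ} (α : Fin (a+b) → Bool) (j : Fin a) (v : Bool) :
    (fun i' => Function.update α (Fin.castAdd b j) v (Fin.castAdd b i'))
      = Function.update (fun i' => α (Fin.castAdd b i')) j v := by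
  funext i'
  by_cases hj : i' = j
  · subst hj; simp
  · have : Fin.castAdd b i' ≠ Fin.castAdd b j := by
      simp [Fin.ext_iff] at hj ⊢; exact hj
    simp [Function.update_apply, hj, this]

lemma update_castAdd_natAdd {a b : ℕ} (α : Fin (a+b) → Bool) (j : Fin a) (v : Bool) :
    (fun j' => Function.update α (Fin.castAdd b j) v (Fin.natAdd a j'))
      = fun j' => α (Fin.natAdd a j') := by
  funext j'
  have : Fin.natAdd a j' ≠ Fin.castAdd b j := by
    simp [Fin.ext_iff]; omega
  simp [Function.update_apply, this]

lemma update_natAdd {a b : ℕ} (α : Fin (a+b) → Bool) (j : Fin b) (v : Bool) :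
    (fun j' => Function.update α (Fin.natAdd a j) v (Fin.natAdd a j'))
      = Function.update (fun j' => α (Fin.natAdd a j')) j v := by
  funext j'
  by_cases hj : j' = j
  · subst hj; simp
  · have : Fin.natAdd a j' ≠ Fin.natAdd a j := by
      simp [Fin.ext_iff] at hj ⊢; omega
    simp [Function.update_apply, hj, this]

lemma update_natAdd_castAdd {a b : ℕ} (α : Fin (a+b) → Bool) (j : Fin b) (v : Bool) :
    (fun i' => Function.update α (Fin.natAdd a j) v (Fin.castAdd b i'))
      = fun i' => α (Fin.castAdd b i') := by
  funext i'
  have : Fin.castAdd b i' ≠ Fin.natAdd a j := by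
    simp [Fin.ext_iff]; omega
  simp [Function.update_apply, this]

lemma key {m : ℕ} {h : (Fin m → Bool) → ℂ} (th : TensorOfS m h) :
    ∀ (α : Fin m → Bool), h α ≠ 0 → ∀ i : Fin m,
    (α i = false →
      (h (Function.update α i true) = h α / 2 ∨ h (Function.update α i true) = 0)) ∧
    (α i = true → h (Function.update α i false) = 2 * h α) := by
  induction th with
  | atom hs =>
    intro α hα i
    rcases hs with ⟨_, hval⟩ | ⟨_, hval⟩
    · -- Δ₀
      rw [hval] at hα
      have hw : wt1 α = 0 := by by_contra hw; simp [hw] at hα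
      have hall := (wt1_eq_zero_iff α).mp hw
      constructor
      · intro hi
        right
        rw [hval, wt1_update_true α i hi, hw]
        simp
      · intro hi; rw [hall i] at hi; exact absurd hi (by simp)
    · -- g_k
      rw [hval] at hα
      have hw : wt1 α = 0 ∨ wt1 α = 1 := by
        by_contra hw; push_neg at hw; simp [hw.1, hw.2] at hα
      constructor
      · intro hi
        rw [hval, hval, wt1_update_true α i hi]
        rcases hw with hw | hw
        · left; rw [hw]; norm_num
        · right; rw [hw]; norm_num
      · intro hi
        have hw1 : wt1 α = 1 := by
          rcases hw with hw | hw
          · rw [(wt1_eq_zero_iff α).mp hw i] at hi; exact absurd hi (by simp)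
          · exact hw
        have := wt1_update_false α i hi
        rw [hw1] at this
        rw [hval, hval, hw1]
        have h0 : wt1 (Function.update α i false) = 0 := by omega
        rw [h0]; norm_num
  | @tensor a b f g hf hg ihf ihg =>
    intro α hα i
    have hα1 : f (fun i' => α (Fin.castAdd b i')) ≠ 0 := fun h0 => hα (by simp [tensorSig, h0])
    have hα2 : g (fun j' => α (Fin.natAdd a j')) ≠ 0 := fun h0 => hα (by simp [tensorSig, h0])
    by_cases hia : (i : ℕ) < a
    · set j : Fin a := ⟨i, hia⟩ with hj
      have hij : i = Fin.castAdd b j := by simp [Fin.ext_iff, hj]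
      have hup : ∀ v, tensorSig f g (Function.update α i v)
          = f (Function.update (fun i' => α (Fin.castAdd b i')) j v)
            * g (fun j' => α (Fin.natAdd a j')) := by
        intro v
        rw [hij]
        simp only [tensorSig, update_castAdd, update_castAdd_natAdd]
      have ih := ihf (fun i' => α (Fin.castAdd b i')) hα1 j
      have hval : α i = (fun i' => α (Fin.castAdd b i')) j := by rw [hij]
      constructor
      · intro hi
        rcases (ih.1 (by rw [← hij]; exact hi)) with hcase | hcase
        · left; rw [hup, hcase]; simp [tensorSig]; ring
        · right; rw [hup, hcase]; simp
      · intro hi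
        have := ih.2 (by rw [← hij]; exact hi)
        rw [hup, this]; simp [tensorSig]; ring
    · push_neg at hia
      have hib : (i : ℕ) - a < b := by omega
      set j : Fin b := ⟨(i : ℕ) - a, hib⟩ with hj
      have hij : i = Fin.natAdd a j := by simp [Fin.ext_iff, hj]; omega
      have hup : ∀ v, tensorSig f g (Function.update α i v)
          = f (fun i' => α (Fin.castAdd b i'))
            * g (Function.update (fun j' => α (Fin.natAdd a j')) j v) := by
        intro v
        rw [hij]
        simp only [tensorSig, update_natAdd, update_natAdd_castAdd]
      have ih := ihg (fun j' => α (Fin.natAdd a j')) hα2 j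
      have hval : α i = (fun j' => α (Fin.natAdd a j')) j := by rw [hij]
      constructor
      · intro hi
        rcases (ih.1 (by rw [← hij]; exact hi)) with hcase | hcase
        · left; rw [hup, hcase]; simp [tensorSig]; ring
        · right; rw [hup, hcase]; simp
      · intro hi
        have := ih.2 (by rw [← hij]; exact hi)
        rw [hup, this]; simp [tensorSig]; ring

lemma update_comp_perm {n : ℕ} (α : Fin n → Bool) (σ : Equiv.Perm (Fin n)) (i : Fin n) (v : Bool) :
    (Function.update α i v) ∘ σ = Function.update (α ∘ σ) (σ.symm i) v := by
  funext j
  by_cases hj : j = σ.symm i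
  · subst hj; simp [Function.comp, Equiv.apply_symm_apply]
  · have : σ j ≠ i := fun h0 => hj (by rw [← h0]; simp)
    simp [Function.comp, Function.update_apply, hj, this]

/-- the inheritance property: let `f ∈ ⟨S⟩` and `α ∈ supp(f)`.
(i) If `αᵢ = 0`, then flipping the `i`-th bit to `1` gives `f(α⁺) = f(α)/2` or
`f(α⁺) = 0`.  (ii) If `αᵢ = 1`, then flipping the `i`-th bit to `0` gives
`f(α⁻) = 2·f(α)`. -/
theorem stmt8 {n : ℕ} (f : (Fin n → Bool) → ℂ) (hf : InTC f)
    (α : Fin n → Bool) (hα : f α ≠ 0) (i : Fin n) :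
    (α i = false →
      (f (Function.update α i true) = f α / 2 ∨ f (Function.update α i true) = 0)) ∧
    (α i = true → f (Function.update α i false) = 2 * f α) := by
  rcases hf with h0 | ⟨c, hc, σ, h, th, heq⟩
  · exact absurd (h0 α) hα
  · have hh : h (α ∘ σ) ≠ 0 := by
      intro h0; apply hα; rw [heq, h0, mul_zero]
    have kmain := key th (α ∘ σ) hh (σ.symm i)
    have hcomp : (α ∘ σ) (σ.symm i) = α i := by simp [Function.comp]
    constructor
    · intro hi
      have hfu : f (Function.update α i true) = c * h (Function.update (α ∘ σ) (σ.symm i) true) := by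
        rw [heq, update_comp_perm]
      rcases kmain.1 (by rw [hcomp]; exact hi) with hcase | hcase
      · left; rw [hfu, hcase, heq]; ring
      · right; rw [hfu, hcase, mul_zero]
    · intro hi
      have hfu : f (Function.update α i false) = c * h (Function.update (α ∘ σ) (σ.symm i) false) := by
        rw [heq, update_comp_perm]
      rw [hfu, kmain.2 (by rw [hcomp]; exact hi), heq α]; ring
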